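/- There exist M > 0 and a constant C₃ > 0 such that for all x ≥ M and all y ≥ 0, with μ = (0, −2x, −2y), one has |1 − 4x z₂(μ)| ≤ C₃ / x. -/

import Mathlib

open Real Filter

/-- Integral of a function over the unit sphere `S² ⊂ ℝ³` with respect to the
surface measure, written in spherical coordinates
`m = (sin θ cos φ, sin θ sin φ, cos θ)` with surface element `sin θ dφ dθ`. -/
noncomputable def sphereIntegral (f : (Fin 3 → ℝ) → ℝ) : ℝ :=
  ∫ θ in (0:ℝ)..Real.pi, ∫ φ in (0:ℝ)..(2 * Real.pi),
    f ![Real.sin θ * Real.cos φ, Real.sin θ * Real.sin φ, Real.cos θ] * Real.sin θ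

/-- The Bingham normalizing constant
`Z(μ) = (1/(4π)) ∫_{S²} exp(μ₁ m₁² + μ₂ m₂² + μ₃ m₃²) dσ(m)`. -/
noncomputable def binghamZ (μ : Fin 3 → ℝ) : ℝ :=
  (1 / (4 * Real.pi)) * sphereIntegral (fun m => Real.exp (∑ i, μ i * (m i) ^ 2))

/-- The second moments of the Bingham distribution:
`zᵢ(μ) = (1/(4π Z(μ))) ∫_{S²} mᵢ² exp(μ₁ m₁² + μ₂ m₂² + μ₃ m₃²) dσ(m)`. -/
noncomputable def binghamZ2 (μ : Fin 3 → ℝ) (i : Fin 3) : ℝ :=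
  (1 / (4 * Real.pi * binghamZ μ)) *
    sphereIntegral (fun m => (m i) ^ 2 * Real.exp (∑ j, μ j * (m j) ^ 2))


namespace BinghamAux
open MeasureTheory intervalIntegral Function
set_option maxHeartbeats 1000000

noncomputable def EE (x y θ φ : ℝ) : ℝ :=
  Real.exp (-(2*x)*(Real.sin θ*Real.sin φ)^2 - 2*y*Real.cos θ^2)
noncomputable def g0 (x y θ φ : ℝ) : ℝ :=
  (1 - 4*x*(Real.sin θ*Real.sin φ)^2) * EE x y θ φ * Real.sin θ
noncomputable def g1 (x y θ φ : ℝ) : ℝ :=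
  (3*(Real.sin θ*Real.sin φ)^2 - 4*x*(Real.sin θ*Real.sin φ)^4
    - 4*y*(Real.sin θ*Real.sin φ)^2*Real.cos θ^2) * EE x y θ φ * Real.sin θ
noncomputable def DP (x y θ φ : ℝ) : ℝ :=
  ((2*Real.sin θ*Real.cos θ^2 - Real.sin θ^3)*Real.sin φ^2
    + Real.sin θ^2*Real.cos θ*Real.sin φ^2*(-(4*x)*Real.sin θ*Real.cos θ*Real.sin φ^2
      + 4*y*Real.cos θ*Real.sin θ)) * EE x y θ φ
noncomputable def DQ (x y θ φ : ℝ) : ℝ :=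
  (Real.sin θ*(Real.cos φ^2 - Real.sin φ^2)
    - 4*x*Real.sin θ^3*Real.sin φ^2*Real.cos φ^2) * EE x y θ φ
noncomputable def gD (x y θ φ : ℝ) : ℝ := EE x y θ φ * Real.sin θ
noncomputable def gN (x y θ φ : ℝ) : ℝ :=
  (Real.sin θ*Real.sin φ)^2 * EE x y θ φ * Real.sin θ
noncomputable def wh (x y θ φ : ℝ) : ℝ :=
  Real.exp (-(x*(Real.sin θ*Real.sin φ)^2) - y*Real.cos θ^2) * Real.sin θ
noncomputable def SI (f : ℝ → ℝ → ℝ) : ℝ :=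
  ∫ θ in (0:ℝ)..π, ∫ φ in (0:ℝ)..(2*π), f θ φ
noncomputable def gg (x y u : ℝ) : ℝ :=
  Real.exp (-y*u^2) / Real.sqrt (max 1 (1+x*(1-u^2)))


/-- the Boltzmann weight -/
lemma cont_EE (x y : ℝ) : Continuous fun p : ℝ × ℝ => EE x y p.1 p.2 := by
  unfold EE; fun_prop

lemma pt_identity (x y θ φ : ℝ) :
    g0 x y θ φ = g1 x y θ φ + DP x y θ φ + DQ x y θ φ := by
  unfold g0 g1 DP DQ
  linear_combination
    (-(EE x y θ φ) * (2*Real.sin θ*Real.sin φ^2 - 4*x*Real.sin θ^3*Real.sin φ^4))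
      * (Real.sin_sq_add_cos_sq θ)
    + (-(EE x y θ φ) * (Real.sin θ - 4*x*Real.sin θ^3*Real.sin φ^2))
      * (Real.sin_sq_add_cos_sq φ)

/-- derivative in θ of `P θ φ = sin θ * cos θ * sin φ * (sin θ * sin φ) * EE` -/
lemma hasDerivAt_P (x y φ θ : ℝ) :
    HasDerivAt (fun t => Real.sin t*Real.cos t*Real.sin φ*(Real.sin t*Real.sin φ) * EE x y t φ)
      (DP x y θ φ) θ := by
  have hs := Real.hasDerivAt_sin θ
  have hc := Real.hasDerivAt_cos θ
  have hsp : HasDerivAt (fun t => Real.sin t * Real.sin φ) (Real.cos θ * Real.sin φ) θ :=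
    hs.mul_const _
  have hu : HasDerivAt (fun t => -(2*x)*(Real.sin t*Real.sin φ)^2 - 2*y*Real.cos t^2)
      (-(2*x)*(2*(Real.sin θ*Real.sin φ)^(2-1)*(Real.cos θ * Real.sin φ))
        - 2*y*(2*Real.cos θ^(2-1)*(-Real.sin θ))) θ := by
    have h1 := (hsp.pow 2).const_mul (-(2*x))
    have h2 := (hc.pow 2).const_mul (2*y)
    exact (h1.sub h2).congr_deriv (by simp)
  have hE := hu.exp
  have hv : HasDerivAt (fun t => Real.sin t*Real.cos t*Real.sin φ*(Real.sin t*Real.sin φ))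
      ((Real.cos θ*Real.cos θ + Real.sin θ*(-Real.sin θ))*Real.sin φ*(Real.sin θ*Real.sin φ)
        + Real.sin θ*Real.cos θ*Real.sin φ*(Real.cos θ*Real.sin φ)) θ :=
    ((hs.mul hc).mul_const _).mul hsp
  have := hv.mul hE
  refine this.congr_deriv ?_
  unfold DP EE
  ring

/-- derivative in φ of `Q θ φ = cos φ * (sin θ * sin φ) * EE` -/
lemma hasDerivAt_Q (x y θ φ : ℝ) :
    HasDerivAt (fun p => Real.cos p*(Real.sin θ*Real.sin p) * EE x y θ p)
      (DQ x y θ φ) φ := by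
  have hs := Real.hasDerivAt_sin φ
  have hc := Real.hasDerivAt_cos φ
  have hsp : HasDerivAt (fun p => Real.sin θ * Real.sin p) (Real.sin θ * Real.cos φ) φ :=
    hs.const_mul _
  have hu : HasDerivAt (fun p => -(2*x)*(Real.sin θ*Real.sin p)^2 - 2*y*Real.cos θ^2)
      (-(2*x)*(2*(Real.sin θ*Real.sin φ)^(2-1)*(Real.sin θ * Real.cos φ))) φ := by
    have h1 := (hsp.pow 2).const_mul (-(2*x))
    simpa using h1.sub_const (2*y*Real.cos θ^2)
  have hE := hu.exp
  have hv : HasDerivAt (fun p => Real.cos p*(Real.sin θ*Real.sin p))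
      ((-Real.sin φ)*(Real.sin θ*Real.sin φ) + Real.cos φ*(Real.sin θ*Real.cos φ)) φ :=
    hc.mul hsp
  have := hv.mul hE
  refine this.congr_deriv ?_
  unfold DQ EE
  ring



lemma inner_cont {f : ℝ → ℝ → ℝ} (hf : Continuous (uncurry f)) (θ : ℝ) :
    Continuous fun φ => f θ φ := hf.comp (Continuous.prodMk_right θ)

lemma inner_ii {f : ℝ → ℝ → ℝ} (hf : Continuous (uncurry f)) (θ a b : ℝ) :
    IntervalIntegrable (fun φ => f θ φ) volume a b :=
  (inner_cont hf θ).intervalIntegrable a b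

lemma outer_cont {f : ℝ → ℝ → ℝ} (hf : Continuous (uncurry f)) :
    Continuous fun θ => ∫ φ in (0:ℝ)..(2*π), f θ φ :=
  intervalIntegral.continuous_parametric_intervalIntegral_of_continuous' hf 0 (2*π)

lemma outer_ii {f : ℝ → ℝ → ℝ} (hf : Continuous (uncurry f)) (a b : ℝ) :
    IntervalIntegrable (fun θ => ∫ φ in (0:ℝ)..(2*π), f θ φ) volume a b :=
  (outer_cont hf).intervalIntegrable a b

lemma SI_add {f g : ℝ → ℝ → ℝ} (hf : Continuous (uncurry f)) (hg : Continuous (uncurry g)) :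
    SI (fun θ φ => f θ φ + g θ φ) = SI f + SI g := by
  unfold SI
  rw [← intervalIntegral.integral_add (outer_ii hf 0 π) (outer_ii hg 0 π)]
  refine intervalIntegral.integral_congr fun θ _ => ?_
  exact intervalIntegral.integral_add (inner_ii hf θ 0 (2*π)) (inner_ii hg θ 0 (2*π))

lemma SI_sub {f g : ℝ → ℝ → ℝ} (hf : Continuous (uncurry f)) (hg : Continuous (uncurry g)) :
    SI (fun θ φ => f θ φ - g θ φ) = SI f - SI g := by
  unfold SI
  rw [← intervalIntegral.integral_sub (outer_ii hf 0 π) (outer_ii hg 0 π)]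
  refine intervalIntegral.integral_congr fun θ _ => ?_
  exact intervalIntegral.integral_sub (inner_ii hf θ 0 (2*π)) (inner_ii hg θ 0 (2*π))

lemma SI_const_mul {f : ℝ → ℝ → ℝ} (c : ℝ) :
    SI (fun θ φ => c * f θ φ) = c * SI f := by
  unfold SI
  rw [← intervalIntegral.integral_const_mul]
  exact intervalIntegral.integral_congr fun θ _ => intervalIntegral.integral_const_mul c _

lemma SI_mono {f g : ℝ → ℝ → ℝ} (hf : Continuous (uncurry f)) (hg : Continuous (uncurry g))
    (h : ∀ θ ∈ Set.Icc (0:ℝ) π, ∀ φ ∈ Set.Icc (0:ℝ) (2*π), f θ φ ≤ g θ φ) :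
    SI f ≤ SI g := by
  unfold SI
  refine intervalIntegral.integral_mono_on Real.pi_nonneg (outer_ii hf 0 π) (outer_ii hg 0 π)
    fun θ hθ => ?_
  refine intervalIntegral.integral_mono_on (by positivity) (inner_ii hf θ 0 (2*π))
    (inner_ii hg θ 0 (2*π)) fun φ hφ => h θ hθ φ hφ

/-- swap of iterated interval integrals for continuous integrands -/
lemma SI_swap {f : ℝ → ℝ → ℝ} (hf : Continuous (uncurry f)) {a b c d : ℝ}
    (hab : a ≤ b) (hcd : c ≤ d) :
    ∫ θ in a..b, ∫ φ in c..d, f θ φ = ∫ φ in c..d, ∫ θ in a..b, f θ φ := by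
  have hint : Integrable (uncurry f) ((volume.restrict (Set.Ioc a b)).prod
      (volume.restrict (Set.Ioc c d))) := by
    rw [Measure.prod_restrict, ← Measure.volume_eq_prod]
    have h1 : IntegrableOn (uncurry f) (Set.Icc a b ×ˢ Set.Icc c d) volume :=
      (hf.continuousOn).integrableOn_compact (isCompact_Icc.prod isCompact_Icc)
    exact h1.mono_set (Set.prod_mono Set.Ioc_subset_Icc_self Set.Ioc_subset_Icc_self)
  have := MeasureTheory.integral_integral_swap hint
  simpa [intervalIntegral.integral_of_le hab, intervalIntegral.integral_of_le hcd] using this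



-- placeholders from previous chunks (axioms for speed of testing)
-- continuity lemmas

lemma cont_g0 (x y : ℝ) : Continuous (uncurry (g0 x y)) := by
  unfold uncurry g0 EE; fun_prop

lemma cont_g1 (x y : ℝ) : Continuous (uncurry (g1 x y)) := by
  unfold uncurry g1 EE; fun_prop

lemma cont_DP (x y : ℝ) : Continuous (uncurry (DP x y)) := by
  unfold uncurry DP EE; fun_prop

lemma cont_DQ (x y : ℝ) : Continuous (uncurry (DQ x y)) := by
  unfold uncurry DQ EE; fun_prop

lemma SI_DQ (x y : ℝ) : SI (DQ x y) = 0 := by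
  unfold SI
  have h0 : (∫ θ in (0:ℝ)..π, (fun _ : ℝ => (0:ℝ)) θ) = 0 := intervalIntegral.integral_zero
  refine Eq.trans (intervalIntegral.integral_congr fun θ _ => ?_) h0
  have h := intervalIntegral.integral_eq_sub_of_hasDerivAt
    (f := fun p => Real.cos p*(Real.sin θ*Real.sin p) * EE x y θ p)
    (f' := fun p => DQ x y θ p) (a := 0) (b := 2*π)
    (fun p _ => hasDerivAt_Q x y θ p)
    ((by unfold DQ EE; fun_prop : Continuous fun p => DQ x y θ p).intervalIntegrable 0 (2*π))
  simpa using h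

lemma SI_DP (x y : ℝ) : SI (DP x y) = 0 := by
  unfold SI
  rw [SI_swap (cont_DP x y) Real.pi_nonneg (by positivity)]
  have h0 : (∫ φ in (0:ℝ)..(2*π), (fun _ : ℝ => (0:ℝ)) φ) = 0 := intervalIntegral.integral_zero
  refine Eq.trans (intervalIntegral.integral_congr fun φ _ => ?_) h0
  have h := intervalIntegral.integral_eq_sub_of_hasDerivAt
    (f := fun t => Real.sin t*Real.cos t*Real.sin φ*(Real.sin t*Real.sin φ) * EE x y t φ)
    (f' := fun t => DP x y t φ) (a := 0) (b := π)
    (fun t _ => hasDerivAt_P x y φ t)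
    ((by unfold DP EE; fun_prop : Continuous fun t => DP x y t φ).intervalIntegrable 0 π)
  simpa using h

lemma SI_g0_eq_g1 (x y : ℝ) : SI (g0 x y) = SI (g1 x y) := by
  have : SI (g0 x y) = SI (fun θ φ => g1 x y θ φ + (fun θ φ => DP x y θ φ + DQ x y θ φ) θ φ) := by
    congr 1; funext θ φ; rw [pt_identity x y θ φ, add_assoc]
  rw [this, SI_add (cont_g1 x y) (by exact (cont_DP x y).add (cont_DQ x y)),
    SI_add (cont_DP x y) (cont_DQ x y), SI_DP, SI_DQ]
  ring



lemma aux_exp1 {a : ℝ} (ha : 0 ≤ a) : a * Real.exp (-a) ≤ Real.exp (-1) := by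
  have h : a ≤ Real.exp (a - 1) := by
    have := Real.add_one_le_exp (a - 1); linarith
  calc a * Real.exp (-a) ≤ Real.exp (a-1) * Real.exp (-a) := by
        exact mul_le_mul_of_nonneg_right h (Real.exp_nonneg _)
    _ = Real.exp (-1) := by rw [← Real.exp_add]; ring_nf

lemma aux_exp2 {a : ℝ} (ha : 0 ≤ a) : a^2 * Real.exp (-a) ≤ 4 * Real.exp (-2) := by
  have h : a / 2 ≤ Real.exp (a/2 - 1) := by
    have := Real.add_one_le_exp (a/2 - 1); linarith
  have h2 : (a/2)^2 ≤ Real.exp (a/2 - 1) ^ 2 :=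
    pow_le_pow_left₀ (by positivity) h 2
  have h3 : Real.exp (a/2 - 1) ^ 2 = Real.exp (a - 2) := by
    rw [← Real.exp_nat_mul]; ring_nf
  calc a^2 * Real.exp (-a) = 4 * (a/2)^2 * Real.exp (-a) := by ring
    _ ≤ 4 * Real.exp (a - 2) * Real.exp (-a) := by
        rw [h3] at h2
        have := mul_le_mul_of_nonneg_right h2 (Real.exp_nonneg (-a))
        nlinarith [Real.exp_nonneg (-a), Real.exp_nonneg (a-2)]
    _ = 4 * Real.exp (-2) := by rw [mul_assoc, ← Real.exp_add]; ring_nf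

lemma exp_le_one_of_nonpos {a : ℝ} (ha : a ≤ 0) : Real.exp a ≤ 1 := Real.exp_le_one_iff.mpr ha

lemma numeric1 : 3 * Real.exp (-1) + 20 * Real.exp (-2) ≤ 4 := by
  have h1 : Real.exp (-1) = (Real.exp 1)⁻¹ := by rw [Real.exp_neg]
  have h2 : Real.exp (-2) = (Real.exp 1)⁻¹ * (Real.exp 1)⁻¹ := by
    rw [← Real.exp_neg, ← Real.exp_add]; norm_num
  have he := Real.exp_one_gt_d9
  have hpos : (0:ℝ) < Real.exp 1 := Real.exp_pos 1
  have hinv : (Real.exp 1)⁻¹ * Real.exp 1 = 1 := inv_mul_cancel₀ (ne_of_gt hpos)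
  rw [h1, h2]
  nlinarith [sq_nonneg ((Real.exp 1)⁻¹), inv_pos.mpr hpos]

lemma core_bound {x y s t : ℝ} (hx : 1 ≤ x) (hy : 0 ≤ y) (hs : 0 ≤ s) (ht : 0 ≤ t) :
    (3*s + 4*x*s^2 + 4*y*s*t) * Real.exp (-(2*x)*s - 2*y*t)
      ≤ 4/x * Real.exp (-(x*s) - y*t) := by
  have hx0 : (0:ℝ) < x := by linarith
  have hA : 0 ≤ x*s := by positivity
  have hB : 0 ≤ y*t := by positivity
  have e1 : Real.exp (-(2*x)*s - 2*y*t)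
      = Real.exp (-(x*s) - y*t) * (Real.exp (-(x*s)) * Real.exp (-(y*t))) := by
    rw [← Real.exp_add, ← Real.exp_add]; ring_nf
  have key : (3*(x*s) + 4*(x*s)^2 + 4*(x*s)*(y*t)) * (Real.exp (-(x*s)) * Real.exp (-(y*t)))
      ≤ 4 := by
    have k1 : (x*s) * Real.exp (-(x*s)) ≤ Real.exp (-1) := aux_exp1 hA
    have k2 : (x*s)^2 * Real.exp (-(x*s)) ≤ 4 * Real.exp (-2) := aux_exp2 hA
    have k3 : (y*t) * Real.exp (-(y*t)) ≤ Real.exp (-1) := aux_exp1 hB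
    have k4 : Real.exp (-(y*t)) ≤ 1 := exp_le_one_of_nonpos (by linarith)
    have k5 : Real.exp (-(x*s)) ≤ 1 := exp_le_one_of_nonpos (by linarith)
    have p1 : 0 ≤ Real.exp (-(x*s)) := Real.exp_nonneg _
    have p2 : 0 ≤ Real.exp (-(y*t)) := Real.exp_nonneg _
    have em1 : Real.exp (-2) = Real.exp (-1) * Real.exp (-1) := by
      rw [← Real.exp_add]; norm_num
    have hnum := numeric1
    nlinarith [mul_le_mul_of_nonneg_right k1 p2, mul_le_mul_of_nonneg_right k2 p2,
      mul_le_mul_of_nonneg_right k3 p1, Real.exp_nonneg (-1), Real.exp_nonneg (-2),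
      mul_nonneg hA hB, mul_le_mul k1 k3 (mul_nonneg hB p2) (Real.exp_nonneg (-1))]
  rw [e1, ← mul_assoc]
  rw [div_mul_eq_mul_div, le_div_iff₀ hx0] at *
  calc (3*s + 4*x*s^2 + 4*y*s*t) * Real.exp (-(x*s) - y*t)
        * (Real.exp (-(x*s)) * Real.exp (-(y*t))) * x
      = ((3*(x*s) + 4*(x*s)^2 + 4*(x*s)*(y*t)) * (Real.exp (-(x*s)) * Real.exp (-(y*t))))
          * Real.exp (-(x*s) - y*t) := by ring
    _ ≤ 4 * Real.exp (-(x*s) - y*t) := by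
        exact mul_le_mul_of_nonneg_right key (Real.exp_nonneg _)
    _ = 4 * Real.exp (-(x*s) - y*t) := rfl



lemma cont_wh (x y : ℝ) : Continuous (uncurry (wh x y)) := by
  unfold uncurry wh; fun_prop

lemma g1_pt_bound {x y : ℝ} (hx : 1 ≤ x) (hy : 0 ≤ y) {θ φ : ℝ}
    (hθ : θ ∈ Set.Icc (0:ℝ) π) :
    |g1 x y θ φ| ≤ 4/x * wh x y θ φ := by
  have hS : 0 ≤ Real.sin θ := Real.sin_nonneg_of_nonneg_of_le_pi hθ.1 hθ.2
  set s := (Real.sin θ*Real.sin φ)^2 with hsdef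
  set t := Real.cos θ^2 with htdef
  have hs : 0 ≤ s := sq_nonneg _
  have ht : 0 ≤ t := sq_nonneg _
  have hEpos : 0 ≤ Real.exp (-(2*x)*s - 2*y*t) := Real.exp_nonneg _
  have habs : |3*s - 4*x*s^2 - 4*y*s*t| ≤ 3*s + 4*x*s^2 + 4*y*s*t := by
    rw [abs_le]
    constructor <;> nlinarith [mul_nonneg (mul_nonneg hy hs) ht, mul_nonneg hs hs,
      mul_nonneg (mul_nonneg (by linarith : (0:ℝ) ≤ x) hs) hs]
  have hcb := core_bound hx hy hs ht
  have step1 : |g1 x y θ φ|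
      ≤ (3*s + 4*x*s^2 + 4*y*s*t) * Real.exp (-(2*x)*s - 2*y*t) * Real.sin θ := by
    unfold g1 EE
    rw [abs_mul, abs_mul, abs_of_nonneg hS, abs_of_nonneg hEpos]
    have : |3*(Real.sin θ*Real.sin φ)^2 - 4*x*(Real.sin θ*Real.sin φ)^4
        - 4*y*(Real.sin θ*Real.sin φ)^2*Real.cos θ^2| ≤ 3*s + 4*x*s^2 + 4*y*s*t := by
      have : (Real.sin θ*Real.sin φ)^4 = s^2 := by rw [hsdef]; ring
      calc |3*(Real.sin θ*Real.sin φ)^2 - 4*x*(Real.sin θ*Real.sin φ)^4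
          - 4*y*(Real.sin θ*Real.sin φ)^2*Real.cos θ^2|
          = |3*s - 4*x*s^2 - 4*y*s*t| := by rw [hsdef, htdef]; ring_nf
        _ ≤ _ := habs
    exact mul_le_mul_of_nonneg_right (mul_le_mul_of_nonneg_right this hEpos) hS
  refine step1.trans ?_
  have : wh x y θ φ = Real.exp (-(x*s) - y*t) * Real.sin θ := by unfold wh; rw [hsdef, htdef]
  rw [this, ← mul_assoc]
  exact mul_le_mul_of_nonneg_right hcb hS

lemma abs_SI_g1_le {x y : ℝ} (hx : 1 ≤ x) (hy : 0 ≤ y) :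
    |SI (g1 x y)| ≤ 4/x * SI (wh x y) := by
  have hub : SI (g1 x y) ≤ SI (fun θ φ => 4/x * wh x y θ φ) := by
    refine SI_mono (cont_g1 x y) (by have := cont_wh x y; unfold uncurry at *; fun_prop)
      fun θ hθ φ _ => ?_
    exact (le_abs_self _).trans (g1_pt_bound hx hy hθ)
  have hlb : SI (fun θ φ => -(4/x) * wh x y θ φ) ≤ SI (g1 x y) := by
    refine SI_mono (by have := cont_wh x y; unfold uncurry at *; fun_prop) (cont_g1 x y)
      fun θ hθ φ _ => ?_
    have h := g1_pt_bound hx hy (θ := θ) (φ := φ) hθ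
    have := neg_abs_le (g1 x y θ φ)
    rw [abs_le] at h
    linarith [h.1]
  rw [SI_const_mul (4/x)] at hub
  rw [SI_const_mul (-(4/x))] at hlb
  rw [abs_le]
  constructor <;> linarith



lemma Fb_reduce (b : ℝ) :
    (∫ φ in (0:ℝ)..(2*π), Real.exp (-b*Real.sin φ^2))
      = 4 * ∫ φ in (0:ℝ)..(π/2), Real.exp (-b*Real.sin φ^2) := by
  have hcont : Continuous fun φ : ℝ => Real.exp (-b*Real.sin φ^2) := by fun_prop
  have h1 : (∫ φ in (0:ℝ)..(2*π), Real.exp (-b*Real.sin φ^2))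
      = (∫ φ in (0:ℝ)..π, Real.exp (-b*Real.sin φ^2))
        + ∫ φ in π..(2*π), Real.exp (-b*Real.sin φ^2) :=
    (intervalIntegral.integral_add_adjacent_intervals
      (hcont.intervalIntegrable _ _) (hcont.intervalIntegrable _ _)).symm
  have h2 : (∫ φ in π..(2*π), Real.exp (-b*Real.sin φ^2))
      = ∫ φ in (0:ℝ)..π, Real.exp (-b*Real.sin φ^2) := by
    have := intervalIntegral.integral_comp_add_right (a := (0:ℝ)) (b := π)
      (fun φ => Real.exp (-b*Real.sin φ^2)) π
    rw [zero_add] at this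
    rw [show (2:ℝ)*π = π + π by ring, ← this]
    refine intervalIntegral.integral_congr fun φ _ => ?_
    rw [Real.sin_add_pi]; ring_nf
  have h3 : (∫ φ in (0:ℝ)..π, Real.exp (-b*Real.sin φ^2))
      = 2 * ∫ φ in (0:ℝ)..(π/2), Real.exp (-b*Real.sin φ^2) := by
    have hsplit : (∫ φ in (0:ℝ)..π, Real.exp (-b*Real.sin φ^2))
        = (∫ φ in (0:ℝ)..(π/2), Real.exp (-b*Real.sin φ^2))
          + ∫ φ in (π/2)..π, Real.exp (-b*Real.sin φ^2) :=
      (intervalIntegral.integral_add_adjacent_intervals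
        (hcont.intervalIntegrable _ _) (hcont.intervalIntegrable _ _)).symm
    have h4 : (∫ φ in (π/2)..π, Real.exp (-b*Real.sin φ^2))
        = ∫ φ in (0:ℝ)..(π/2), Real.exp (-b*Real.sin φ^2) := by
      have := intervalIntegral.integral_comp_sub_left (a := (0:ℝ)) (b := π/2)
        (fun φ => Real.exp (-b*Real.sin φ^2)) π
      rw [sub_zero, show π - π/2 = π/2 by ring] at this
      rw [← this]
      refine intervalIntegral.integral_congr fun φ _ => ?_
      rw [Real.sin_pi_sub]
    rw [hsplit, h4]; ring
  rw [h1, h2, h3]; ring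

lemma Fb {b : ℝ} (hb : 0 ≤ b) :
    (∫ φ in (0:ℝ)..(2*π), Real.exp (-b*Real.sin φ^2)) ≤ 18/Real.sqrt (1+b) := by
  have hcont : Continuous fun φ : ℝ => Real.exp (-b*Real.sin φ^2) := by fun_prop
  rcases le_or_gt b 1 with hb1 | hb1
  · -- small b : bound integrand by 1
    have hle : (∫ φ in (0:ℝ)..(2*π), Real.exp (-b*Real.sin φ^2))
        ≤ ∫ _ in (0:ℝ)..(2*π), (1:ℝ) := by
      refine intervalIntegral.integral_mono_on (by positivity)
        (hcont.intervalIntegrable _ _) (intervalIntegrable_const) fun φ _ => ?_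
      refine Real.exp_le_one_iff.mpr ?_
      nlinarith [sq_nonneg (Real.sin φ)]
    rw [intervalIntegral.integral_const, smul_eq_mul, mul_one, sub_zero] at hle
    refine hle.trans ?_
    rw [le_div_iff₀ (Real.sqrt_pos.mpr (by linarith : (0:ℝ) < 1+b))]
    have hs : Real.sqrt (1+b) ≤ Real.sqrt 2 := Real.sqrt_le_sqrt (by linarith)
    have h2 : Real.sqrt 2 ≤ 2 := by
      have h4 : Real.sqrt (4:ℝ) = 2 := by
        rw [show (4:ℝ) = 2^2 by norm_num, Real.sqrt_sq (by norm_num : (0:ℝ) ≤ 2)]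
      exact (Real.sqrt_le_sqrt (by norm_num : (2:ℝ) ≤ 4)).trans_eq h4
    nlinarith [Real.pi_lt_d2, Real.pi_pos, Real.sqrt_nonneg (1+b)]
  · -- large b : gaussian bound
    rw [Fb_reduce b]
    have hb0 : (0:ℝ) < b := by linarith
    have key : (∫ φ in (0:ℝ)..(π/2), Real.exp (-b*Real.sin φ^2))
        ≤ Real.sqrt (π^3/(4*b)) := by
      have step1 : (∫ φ in (0:ℝ)..(π/2), Real.exp (-b*Real.sin φ^2))
          ≤ ∫ φ in (0:ℝ)..(π/2), Real.exp (-(4*b/π^2)*φ^2) := by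
        refine intervalIntegral.integral_mono_on (by positivity)
          (hcont.intervalIntegrable _ _) ((by fun_prop : Continuous fun φ : ℝ =>
            Real.exp (-(4*b/π^2)*φ^2)).intervalIntegrable _ _) fun φ hφ => ?_
        refine Real.exp_le_exp.mpr ?_
        have hsin := Real.mul_le_sin hφ.1 hφ.2
        have hsin0 : 0 ≤ 2/π * φ := mul_nonneg (by positivity) hφ.1
        have : (2/π*φ)^2 ≤ Real.sin φ^2 := by
          have := Real.sin_nonneg_of_nonneg_of_le_pi hφ.1 (hφ.2.trans (by linarith [Real.pi_pos]))
          nlinarith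
        have hπ := Real.pi_pos
        have h5 : b*(2/π*φ)^2 ≤ b*Real.sin φ^2 := mul_le_mul_of_nonneg_left this hb
        have h6 : -(4*b/π^2)*φ^2 = -(b*(2/π*φ)^2) := by field_simp; ring
        rw [h6]; linarith
      refine step1.trans ?_
      have hc : (0:ℝ) < 4*b/π^2 := by
        have := Real.pi_pos
        exact div_pos (by linarith) (by positivity)
      have hint : Integrable (fun φ : ℝ => Real.exp (-(4*b/π^2)*φ^2)) :=
        integrable_exp_neg_mul_sq hc
      have hIoc : (∫ φ in (0:ℝ)..(π/2), Real.exp (-(4*b/π^2)*φ^2))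
          = ∫ φ in Set.Ioc (0:ℝ) (π/2), Real.exp (-(4*b/π^2)*φ^2) :=
        intervalIntegral.integral_of_le (by positivity)
      rw [hIoc]
      have hle2 : (∫ φ in Set.Ioc (0:ℝ) (π/2), Real.exp (-(4*b/π^2)*φ^2))
          ≤ ∫ φ : ℝ, Real.exp (-(4*b/π^2)*φ^2) :=
        setIntegral_le_integral hint (Filter.Eventually.of_forall fun φ => Real.exp_nonneg _)
      rw [integral_gaussian] at hle2
      refine hle2.trans (le_of_eq ?_)
      congr 1
      rw [div_div_eq_mul_div]
      ring
    have h4 : 4 * (∫ φ in (0:ℝ)..(π/2), Real.exp (-b*Real.sin φ^2))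
        ≤ 4 * Real.sqrt (π^3/(4*b)) := by linarith
    refine h4.trans ?_
    -- 4 * sqrt(π³/(4b)) ≤ 18/sqrt(1+b)
    have hs1 : Real.sqrt (π^3/(4*b)) ≤ Real.sqrt ((81/4)/(1+b)) := by
      refine Real.sqrt_le_sqrt ?_
      rw [div_le_div_iff₀ (by positivity) (by positivity)]
      have hπ2 : π^2 ≤ 10 := by nlinarith [Real.pi_lt_d2, Real.pi_pos]
      have hπ3 : π^3 ≤ 32 := by nlinarith [Real.pi_lt_d2, Real.pi_pos, hπ2]
      nlinarith [hπ3, mul_le_mul_of_nonneg_right hπ3 hb0.le]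
    have hs2 : Real.sqrt ((81/4)/(1+b)) = (9/2)/Real.sqrt (1+b) := by
      rw [Real.sqrt_div (by norm_num : (0:ℝ) ≤ 81/4) (1+b)]
      congr 1
      rw [show (81:ℝ)/4 = (9/2)^2 by norm_num, Real.sqrt_sq (by norm_num : (0:ℝ) ≤ 9/2)]
    rw [hs2] at hs1
    calc 4 * Real.sqrt (π^3/(4*b)) ≤ 4 * ((9/2)/Real.sqrt (1+b)) := by linarith
      _ = 18/Real.sqrt (1+b) := by ring



/-- comparison function after the `u = cos θ` substitution -/
lemma gg_den_pos (x u : ℝ) : 0 < Real.sqrt (max 1 (1+x*(1-u^2))) :=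
  Real.sqrt_pos.mpr (lt_of_lt_of_le one_pos (le_max_left _ _))

lemma cont_gg (x y : ℝ) : Continuous (gg x y) := by
  unfold gg
  refine Continuous.div (by fun_prop) ((continuous_const.max (by fun_prop)).sqrt)
    fun u => ne_of_gt (gg_den_pos x u)

lemma gg_nonneg (x y u : ℝ) : 0 ≤ gg x y u :=
  div_nonneg (Real.exp_nonneg _) (Real.sqrt_nonneg _)

lemma wh_inner_le {x y : ℝ} (hx : 1 ≤ x) (θ : ℝ) (hθ : θ ∈ Set.Icc (0:ℝ) π) :
    (∫ φ in (0:ℝ)..(2*π), wh x y θ φ) ≤ 18 * gg x y (Real.cos θ) * Real.sin θ := by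
  have hS : 0 ≤ Real.sin θ := Real.sin_nonneg_of_nonneg_of_le_pi hθ.1 hθ.2
  have hsplit : ∀ φ : ℝ, wh x y θ φ
      = Real.exp (-(x*Real.sin θ^2)*Real.sin φ^2) * (Real.exp (-y*Real.cos θ^2)*Real.sin θ) := by
    intro φ
    unfold wh
    rw [show -(x*(Real.sin θ*Real.sin φ)^2) - y*Real.cos θ^2
      = (-(x*Real.sin θ^2)*Real.sin φ^2) + (-y*Real.cos θ^2) by ring, Real.exp_add]
    ring
  have h1 : (∫ φ in (0:ℝ)..(2*π), wh x y θ φ)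
      = (∫ φ in (0:ℝ)..(2*π), Real.exp (-(x*Real.sin θ^2)*Real.sin φ^2))
        * (Real.exp (-y*Real.cos θ^2)*Real.sin θ) := by
    rw [← intervalIntegral.integral_mul_const]
    exact intervalIntegral.integral_congr fun φ _ => hsplit φ
  rw [h1]
  have hb : (0:ℝ) ≤ x*Real.sin θ^2 := by positivity
  have h2 := Fb hb
  have h3 : (∫ φ in (0:ℝ)..(2*π), Real.exp (-(x*Real.sin θ^2)*Real.sin φ^2))
        * (Real.exp (-y*Real.cos θ^2)*Real.sin θ)
      ≤ (18/Real.sqrt (1+x*Real.sin θ^2)) * (Real.exp (-y*Real.cos θ^2)*Real.sin θ) :=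
    mul_le_mul_of_nonneg_right h2 (by positivity)
  refine h3.trans (le_of_eq ?_)
  have hmax : max 1 (1+x*(1-Real.cos θ^2)) = 1+x*(1-Real.cos θ^2) := by
    refine max_eq_right ?_
    nlinarith [Real.cos_sq_le_one θ]
  unfold gg
  rw [hmax, show 1+x*(1-Real.cos θ^2) = 1+x*Real.sin θ^2 by
    rw [Real.sin_sq]]
  ring

lemma SI_wh_le_subst {x y : ℝ} (hx : 1 ≤ x) :
    SI (wh x y) ≤ 18 * ∫ u in (-1:ℝ)..1, gg x y u := by
  have step1 : SI (wh x y) ≤ ∫ θ in (0:ℝ)..π, 18 * gg x y (Real.cos θ) * Real.sin θ := by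
    unfold SI
    refine intervalIntegral.integral_mono_on Real.pi_nonneg (outer_ii (cont_wh x y) 0 π)
      (((continuous_const.mul ((cont_gg x y).comp Real.continuous_cos)).mul
        Real.continuous_sin).intervalIntegrable 0 π) fun θ hθ => wh_inner_le hx θ hθ
  refine step1.trans (le_of_eq ?_)
  have hsub := intervalIntegral.integral_comp_smul_deriv (f := Real.cos)
    (f' := fun t => -Real.sin t) (g := gg x y) (a := (0:ℝ)) (b := π)
    (fun t _ => Real.hasDerivAt_cos t)
    ((Real.continuous_sin.neg).continuousOn) (cont_gg x y)
  rw [Real.cos_zero, Real.cos_pi] at hsub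
  have hlhs : (∫ t in (0:ℝ)..π, (-Real.sin t) • (gg x y ∘ Real.cos) t)
      = - ∫ t in (0:ℝ)..π, gg x y (Real.cos t) * Real.sin t := by
    rw [← intervalIntegral.integral_neg]
    refine intervalIntegral.integral_congr fun t _ => ?_
    simp only [smul_eq_mul, comp_apply]
    ring
  rw [hlhs, intervalIntegral.integral_symm (-1) 1, neg_inj] at hsub
  have hfin : (∫ θ in (0:ℝ)..π, 18 * gg x y (Real.cos θ) * Real.sin θ)
      = 18 * ∫ θ in (0:ℝ)..π, gg x y (Real.cos θ) * Real.sin θ := by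
    rw [← intervalIntegral.integral_const_mul]
    exact intervalIntegral.integral_congr fun t _ => by ring
  rw [hfin, hsub]

lemma exp_quarter_le {y : ℝ} (hy : 0 ≤ y) : Real.exp (-(y/4)) ≤ 2/Real.sqrt (1+y) := by
  have h1 : Real.sqrt (1+y) ≤ 2*Real.exp (y/4) := by
    have hsq : 1+y ≤ (2*Real.exp (y/4))^2 := by
      have h2 : (2*Real.exp (y/4))^2 = 4*Real.exp (y/2) := by
        rw [mul_pow, sq (Real.exp (y/4)), ← Real.exp_add]
        norm_num
        rw [show y/4+y/4 = y/2 by ring]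
      rw [h2]
      nlinarith [Real.add_one_le_exp (y/2)]
    calc Real.sqrt (1+y) ≤ Real.sqrt ((2*Real.exp (y/4))^2) := Real.sqrt_le_sqrt hsq
      _ = 2*Real.exp (y/4) := Real.sqrt_sq (by positivity)
  rw [Real.exp_neg, inv_eq_one_div,
    div_le_div_iff₀ (Real.exp_pos _) (Real.sqrt_pos.mpr (by linarith))]
  linarith

lemma emid {y : ℝ} (hy : 0 ≤ y) :
    (∫ u in (-(1:ℝ)/2)..(1/2), Real.exp (-y*u^2)) ≤ 3/Real.sqrt (1+y) := by
  rcases le_or_gt y 1 with hy1 | hy1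
  · have hle : (∫ u in (-(1:ℝ)/2)..(1/2), Real.exp (-y*u^2)) ≤ ∫ _ in (-(1:ℝ)/2)..(1/2), (1:ℝ) := by
      refine intervalIntegral.integral_mono_on (by norm_num)
        ((by fun_prop : Continuous fun u : ℝ => Real.exp (-y*u^2)).intervalIntegrable _ _)
        intervalIntegrable_const fun u _ => ?_
      refine Real.exp_le_one_iff.mpr ?_
      nlinarith [sq_nonneg u]
    rw [intervalIntegral.integral_const, smul_eq_mul, mul_one] at hle
    refine hle.trans ?_
    rw [le_div_iff₀ (Real.sqrt_pos.mpr (by linarith))]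
    have : Real.sqrt (1+y) ≤ Real.sqrt 4 := Real.sqrt_le_sqrt (by linarith)
    have h4 : Real.sqrt (4:ℝ) = 2 := by
      rw [show (4:ℝ) = 2^2 by norm_num, Real.sqrt_sq (by norm_num : (0:ℝ) ≤ 2)]
    nlinarith
  · have hy0 : (0:ℝ) < y := by linarith
    have hint : Integrable (fun u : ℝ => Real.exp (-y*u^2)) := integrable_exp_neg_mul_sq hy0
    have hIoc : (∫ u in (-(1:ℝ)/2)..(1/2), Real.exp (-y*u^2))
        = ∫ u in Set.Ioc (-(1:ℝ)/2) (1/2), Real.exp (-y*u^2) :=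
      intervalIntegral.integral_of_le (by norm_num)
    rw [hIoc]
    have hle : (∫ u in Set.Ioc (-(1:ℝ)/2) (1/2), Real.exp (-y*u^2))
        ≤ ∫ u : ℝ, Real.exp (-y*u^2) :=
      setIntegral_le_integral hint (Filter.Eventually.of_forall fun u => Real.exp_nonneg _)
    rw [integral_gaussian] at hle
    refine hle.trans ?_
    have h1 : Real.sqrt (π/y) ≤ Real.sqrt (9/(1+y)) := by
      refine Real.sqrt_le_sqrt ?_
      rw [div_le_div_iff₀ hy0 (by linarith)]
      nlinarith [Real.pi_lt_d2]
    have h2 : Real.sqrt (9/(1+y)) = 3/Real.sqrt (1+y) := by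
      rw [Real.sqrt_div (by norm_num : (0:ℝ) ≤ 9)]
      congr 1
      rw [show (9:ℝ) = 3^2 by norm_num, Real.sqrt_sq (by norm_num : (0:ℝ) ≤ 3)]
    rw [h2] at h1
    exact h1

lemma edge_ftc {x : ℝ} (hx : 1 ≤ x) :
    (∫ u in (1/2:ℝ)..1, 1/Real.sqrt (1+x*(1-u))) ≤ 3/Real.sqrt x := by
  have hx0 : (0:ℝ) < x := by linarith
  have hD : ∀ u ∈ Set.uIcc (1/2:ℝ) 1, HasDerivAt (fun u => -(2/x)*Real.sqrt (1+x*(1-u)))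
      (1/Real.sqrt (1+x*(1-u))) u := by
    intro u hu
    rw [Set.uIcc_of_le (by norm_num)] at hu
    have hin : 0 < 1+x*(1-u) := by nlinarith [hu.1, hu.2]
    have h1 : HasDerivAt (fun u : ℝ => 1+x*(1-u)) (-x) u := by
      have := ((hasDerivAt_id u).const_sub 1).const_mul x
      refine (this.const_add 1).congr_deriv ?_
      ring
    have h2 := (h1.sqrt (ne_of_gt hin)).const_mul (-(2/x))
    refine h2.congr_deriv ?_
    have hsq : Real.sqrt (1+x*(1-u)) ≠ 0 := ne_of_gt (Real.sqrt_pos.mpr hin)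
    field_simp
  have hcont : ContinuousOn (fun u => 1/Real.sqrt (1+x*(1-u))) (Set.uIcc (1/2:ℝ) 1) := by
    rw [Set.uIcc_of_le (by norm_num)]
    refine ContinuousOn.div continuousOn_const ((Continuous.continuousOn (by fun_prop)).sqrt)
      fun u hu => ?_
    have hin : 0 < 1+x*(1-u) := by nlinarith [hu.1, hu.2]
    exact ne_of_gt (Real.sqrt_pos.mpr hin)
  have hftc := intervalIntegral.integral_eq_sub_of_hasDerivAt hD hcont.intervalIntegrable
  rw [hftc]
  have he1 : (1:ℝ)+x*(1-1) = 1 := by ring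
  have hval : -(2/x)*Real.sqrt (1+x*(1-1)) - (-(2/x)*Real.sqrt (1+x*(1-1/2)))
      = (2/x)*(Real.sqrt (1+x/2) - 1) := by
    rw [he1, Real.sqrt_one]
    rw [show (1:ℝ)+x*(1-1/2) = 1+x/2 by ring]
    ring
  rw [hval]
  have hs : Real.sqrt (1+x/2) ≤ (3/2)*Real.sqrt x := by
    have : (1:ℝ)+x/2 ≤ (9/4)*x := by linarith
    calc Real.sqrt (1+x/2) ≤ Real.sqrt ((9/4)*x) := Real.sqrt_le_sqrt this
      _ = (3/2)*Real.sqrt x := by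
          rw [show (9/4:ℝ)*x = (3/2)^2*x by norm_num, Real.sqrt_mul (by positivity),
            Real.sqrt_sq (by norm_num : (0:ℝ) ≤ 3/2)]
  have hsx : (0:ℝ) < Real.sqrt x := Real.sqrt_pos.mpr hx0
  rw [le_div_iff₀ hsx]
  have hxx : Real.sqrt x * Real.sqrt x = x := Real.mul_self_sqrt hx0.le
  have h2x : (0:ℝ) < 2/x := by positivity
  have hstep : Real.sqrt (1+x/2) - 1 ≤ (3/2)*Real.sqrt x := by linarith
  calc (2/x)*(Real.sqrt (1+x/2) - 1) * Real.sqrt x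
      ≤ (2/x)*((3/2)*Real.sqrt x) * Real.sqrt x :=
        mul_le_mul_of_nonneg_right (mul_le_mul_of_nonneg_left hstep h2x.le) hsx.le
    _ = 3 * (Real.sqrt x * Real.sqrt x) / x := by ring
    _ = 3 := by rw [hxx]; field_simp



lemma right_edge {x y : ℝ} (hx : 1 ≤ x) (hy : 0 ≤ y) :
    (∫ u in (1/2:ℝ)..1, gg x y u)
      ≤ 6/(Real.sqrt x*Real.sqrt (1+y)) := by
  have hx0 : (0:ℝ) < x := by linarith
  have hptw : ∀ u ∈ Set.Icc (1/2:ℝ) 1,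
      gg x y u ≤ Real.exp (-(y/4)) * (1/Real.sqrt (1+x*(1-u))) := by
    intro u hu
    have hin : (0:ℝ) < 1+x*(1-u) := by nlinarith [hu.1, hu.2]
    have hden : Real.sqrt (1+x*(1-u)) ≤ Real.sqrt (max 1 (1+x*(1-u^2))) := by
      refine Real.sqrt_le_sqrt (le_trans ?_ (le_max_right _ _))
      nlinarith [mul_nonneg (mul_nonneg hx0.le (by linarith [hu.1] : (0:ℝ) ≤ u))
        (by linarith [hu.2] : (0:ℝ) ≤ 1-u)]
    have hnum : Real.exp (-y*u^2) ≤ Real.exp (-(y/4)) := by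
      refine Real.exp_le_exp.mpr ?_
      nlinarith [hu.1, hu.2, mul_le_mul_of_nonneg_left (by nlinarith [hu.1] : (1/4:ℝ) ≤ u^2) hy]
    unfold gg
    rw [mul_one_div]
    exact div_le_div₀ (Real.exp_nonneg _) hnum (Real.sqrt_pos.mpr hin) hden
  have hmono : (∫ u in (1/2:ℝ)..1, gg x y u)
      ≤ ∫ u in (1/2:ℝ)..1, Real.exp (-(y/4)) * (1/Real.sqrt (1+x*(1-u))) := by
    refine intervalIntegral.integral_mono_on (by norm_num)
      ((cont_gg x y).intervalIntegrable _ _) ?_ hptw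
    refine ContinuousOn.intervalIntegrable ?_
    rw [Set.uIcc_of_le (by norm_num)]
    refine ContinuousOn.mul continuousOn_const ?_
    refine ContinuousOn.div continuousOn_const ((Continuous.continuousOn (by fun_prop)).sqrt)
      fun u hu => ?_
    have hin : (0:ℝ) < 1+x*(1-u) := by nlinarith [hu.1, hu.2]
    exact ne_of_gt (Real.sqrt_pos.mpr hin)
  rw [intervalIntegral.integral_const_mul] at hmono
  refine hmono.trans ?_
  have h1 := mul_le_mul (exp_quarter_le hy) (edge_ftc hx)
    (intervalIntegral.integral_nonneg (by norm_num) fun u hu => by positivity)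
    (by positivity)
  refine h1.trans (le_of_eq ?_)
  rw [div_mul_div_comm]
  norm_num
  rw [mul_comm (Real.sqrt (1+y)) (Real.sqrt x)]

lemma left_edge {x y : ℝ} (hx : 1 ≤ x) (hy : 0 ≤ y) :
    (∫ u in (-1:ℝ)..(-(1:ℝ)/2), gg x y u)
      ≤ 6/(Real.sqrt x*Real.sqrt (1+y)) := by
  have heven : (∫ u in (-1:ℝ)..(-(1:ℝ)/2), gg x y u) = ∫ u in (1/2:ℝ)..1, gg x y u := by
    have h := intervalIntegral.integral_comp_neg (a := (1/2:ℝ)) (b := 1) (fun u => gg x y u)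
    rw [show (-(1:ℝ)/2) = -(1/2:ℝ) by norm_num, ← h]
    refine intervalIntegral.integral_congr fun u _ => ?_
    show gg x y (-u) = gg x y u
    unfold gg
    simp only [neg_sq]
  rw [heven]
  exact right_edge hx hy

lemma mid_piece {x y : ℝ} (hx : 1 ≤ x) (hy : 0 ≤ y) :
    (∫ u in (-(1:ℝ)/2)..(1/2), gg x y u) ≤ 6/(Real.sqrt x*Real.sqrt (1+y)) := by
  have hx0 : (0:ℝ) < x := by linarith
  have hsx : (0:ℝ) < Real.sqrt x := Real.sqrt_pos.mpr hx0
  have hptw : ∀ u ∈ Set.Icc (-(1:ℝ)/2) (1/2),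
      gg x y u ≤ Real.exp (-y*u^2) * (2/Real.sqrt x) := by
    intro u hu
    have hden : Real.sqrt x / 2 ≤ Real.sqrt (max 1 (1+x*(1-u^2))) := by
      have h1 : Real.sqrt (x/4) ≤ Real.sqrt (max 1 (1+x*(1-u^2))) := by
        refine Real.sqrt_le_sqrt (le_trans ?_ (le_max_right _ _))
        have ha : (0:ℝ) ≤ 1/2-u := by linarith [hu.2]
        have hb : (0:ℝ) ≤ u+1/2 := by linarith [hu.1]
        have hu2 : u^2 ≤ 1/4 := by nlinarith [mul_nonneg ha hb]
        nlinarith [mul_le_mul_of_nonneg_left hu2 hx0.le]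
      refine le_trans (le_of_eq ?_) h1
      have h42 : Real.sqrt (4:ℝ) = 2 := by
        rw [show (4:ℝ) = 2^2 by norm_num, Real.sqrt_sq (by norm_num : (0:ℝ) ≤ 2)]
      rw [Real.sqrt_div hx0.le, h42]
    unfold gg
    have h2 : gg x y u ≤ Real.exp (-y*u^2) / (Real.sqrt x/2) := by
      unfold gg
      exact div_le_div₀ (Real.exp_nonneg _) le_rfl (by positivity) hden
    refine h2.trans (le_of_eq ?_)
    field_simp
  have hmono : (∫ u in (-(1:ℝ)/2)..(1/2), gg x y u)
      ≤ ∫ u in (-(1:ℝ)/2)..(1/2), Real.exp (-y*u^2) * (2/Real.sqrt x) := by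
    refine intervalIntegral.integral_mono_on (by norm_num)
      ((cont_gg x y).intervalIntegrable _ _)
      (((by fun_prop : Continuous fun u : ℝ => Real.exp (-y*u^2)).mul
        continuous_const).intervalIntegrable _ _) hptw
  rw [intervalIntegral.integral_mul_const] at hmono
  refine hmono.trans ?_
  have h1 := mul_le_mul_of_nonneg_right (emid hy) (by positivity : (0:ℝ) ≤ 2/Real.sqrt x)
  refine h1.trans (le_of_eq ?_)
  rw [div_mul_div_comm]
  norm_num
  rw [mul_comm (Real.sqrt (1+y)) (Real.sqrt x)]

lemma oneD_bound {x y : ℝ} (hx : 1 ≤ x) (hy : 0 ≤ y) :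
    (∫ u in (-1:ℝ)..1, gg x y u) ≤ 18/(Real.sqrt x*Real.sqrt (1+y)) := by
  have hii : ∀ a b : ℝ, IntervalIntegrable (gg x y) volume a b :=
    fun a b => (cont_gg x y).intervalIntegrable a b
  have hsplit : (∫ u in (-1:ℝ)..1, gg x y u)
      = (∫ u in (-1:ℝ)..(-(1:ℝ)/2), gg x y u) + (∫ u in (-(1:ℝ)/2)..(1/2), gg x y u)
        + (∫ u in (1/2:ℝ)..1, gg x y u) := by
    rw [intervalIntegral.integral_add_adjacent_intervals (hii _ _) (hii _ _),
      intervalIntegral.integral_add_adjacent_intervals (hii _ _) (hii _ _)]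
  rw [hsplit]
  have h1 := left_edge hx hy
  have h2 := mid_piece hx hy
  have h3 := right_edge hx hy
  have : (18:ℝ)/(Real.sqrt x*Real.sqrt (1+y)) = 6/(Real.sqrt x*Real.sqrt (1+y))
      + 6/(Real.sqrt x*Real.sqrt (1+y)) + 6/(Real.sqrt x*Real.sqrt (1+y)) := by ring
  rw [this]
  gcongr

lemma SI_wh_bound {x y : ℝ} (hx : 1 ≤ x) (hy : 0 ≤ y) :
    SI (wh x y) ≤ 324/(Real.sqrt x*Real.sqrt (1+y)) := by
  refine (SI_wh_le_subst hx).trans ?_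
  have := oneD_bound hx hy
  calc 18 * ∫ u in (-1:ℝ)..1, gg x y u ≤ 18 * (18/(Real.sqrt x*Real.sqrt (1+y))) := by linarith
    _ = 324/(Real.sqrt x*Real.sqrt (1+y)) := by ring


set_option maxHeartbeats 1000000

lemma cont_gD (x y : ℝ) : Continuous (uncurry (gD x y)) := by
  unfold uncurry gD EE; fun_prop

lemma exp_52 : (1:ℝ)/21 ≤ Real.exp (-(5/2)) := by
  have h3 : Real.exp (5/2) ≤ Real.exp 3 := Real.exp_le_exp.mpr (by norm_num)
  have he3 : Real.exp 3 = Real.exp 1 ^ 3 := by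
    rw [show (3:ℝ) = ((3:ℕ):ℝ)*(1:ℝ) by norm_num, Real.exp_nat_mul]
  have hlt : Real.exp 1 ^ 3 ≤ 21 := by
    have he := Real.exp_one_lt_d9
    have hp := (Real.exp_pos 1).le
    have h2 : Real.exp 1^2 ≤ (2.7182818286:ℝ)^2 := by nlinarith
    have h3c : Real.exp 1^3 ≤ (2.7182818286:ℝ)^3 := by nlinarith
    nlinarith
  have h21 : Real.exp (5/2) ≤ 21 := by rw [he3] at h3; linarith
  rw [Real.exp_neg]
  rw [div_le_iff₀ (by norm_num)]
  rw [inv_mul_eq_div, le_div_iff₀ (Real.exp_pos _)]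
  linarith

lemma gD_nonneg (x y : ℝ) {θ : ℝ} (hθ : θ ∈ Set.Icc (0:ℝ) π) (φ : ℝ) : 0 ≤ gD x y θ φ :=
  mul_nonneg (Real.exp_nonneg _) (Real.sin_nonneg_of_nonneg_of_le_pi hθ.1 hθ.2)

lemma gD_pt_lower {x y : ℝ} (hx : 1 ≤ x) (hy : 0 ≤ y) {θ φ : ℝ}
    (hθ : θ ∈ Set.Icc (π/2 - 1/(2*Real.sqrt (1+y))) (π/2))
    (hφ : φ ∈ Set.Icc (0:ℝ) (1/Real.sqrt x)) :
    1/28 ≤ gD x y θ φ := by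
  have hx0 : (0:ℝ) < x := by linarith
  have hsy1 : (1:ℝ) ≤ Real.sqrt (1+y) := Real.one_le_sqrt.mpr (by linarith)
  have hsx1 : (1:ℝ) ≤ Real.sqrt x := Real.one_le_sqrt.mpr (by linarith)
  set δ := 1/(2*Real.sqrt (1+y)) with hδdef
  set ε := 1/Real.sqrt x with hεdef
  have hδpos : 0 < δ := by positivity
  have hδhalf : δ ≤ 1/2 := by
    rw [hδdef, div_le_div_iff₀ (by positivity) (by norm_num)]
    linarith
  have hεpos : 0 < ε := by positivity
  have hε1 : ε ≤ 1 := by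
    rw [hεdef, div_le_one (by positivity)]; exact hsx1
  have hπ : (3:ℝ) < π := Real.pi_gt_three
  -- basic ranges
  have hθ1 : π/2 - δ ≤ θ := hθ.1
  have hθ2 : θ ≤ π/2 := hθ.2
  have ht0 : 0 ≤ π/2 - θ := by linarith
  have htδ : π/2 - θ ≤ δ := by linarith
  -- sin θ ≥ 3/4
  have hS : (3:ℝ)/4 ≤ Real.sin θ := by
    have h1 : Real.sin θ = Real.cos (π/2 - θ) := (Real.cos_pi_div_two_sub θ).symm
    have h2 : 1 - (π/2-θ)^2/2 ≤ Real.cos (π/2 - θ) := Real.one_sub_sq_div_two_le_cos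
    have h3 : (π/2-θ)^2 ≤ δ^2 := by nlinarith
    have h4 : δ^2 ≤ 1/4 := by nlinarith
    rw [h1]; nlinarith
  -- cos θ ^ 2 ≤ δ ^ 2
  have hC : Real.cos θ^2 ≤ δ^2 := by
    have h1 : Real.cos θ = Real.sin (π/2 - θ) := (Real.sin_pi_div_two_sub θ).symm
    have h2 : Real.sin (π/2 - θ) ≤ π/2 - θ := Real.sin_le ht0
    have h3 : 0 ≤ Real.sin (π/2 - θ) :=
      Real.sin_nonneg_of_nonneg_of_le_pi ht0 (by linarith)
    rw [h1]; nlinarith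
  -- (sin θ * sin φ)^2 ≤ ε^2
  have hp : (Real.sin θ*Real.sin φ)^2 ≤ ε^2 := by
    have h0 : 0 ≤ Real.sin φ := Real.sin_nonneg_of_nonneg_of_le_pi hφ.1
      (le_trans hφ.2 (by linarith))
    have h1 : Real.sin φ ≤ φ := Real.sin_le hφ.1
    have h2 : Real.sin φ ≤ ε := h1.trans hφ.2
    have h3 : Real.sin θ ≤ 1 := Real.sin_le_one θ
    have h4 : 0 ≤ Real.sin θ := by linarith
    have hq1 : Real.sin φ^2 ≤ ε^2 := by nlinarith
    have hq2 : Real.sin θ^2 ≤ 1 := by nlinarith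
    calc (Real.sin θ*Real.sin φ)^2 = Real.sin θ^2*Real.sin φ^2 := by ring
      _ ≤ 1*Real.sin φ^2 := by nlinarith [sq_nonneg (Real.sin φ)]
      _ ≤ ε^2 := by linarith
  -- exponent bound
  have hε2 : ε^2 = 1/x := by
    rw [hεdef, div_pow, one_pow, Real.sq_sqrt hx0.le]
  have hδ2 : δ^2 = 1/(4*(1+y)) := by
    rw [hδdef, div_pow, one_pow, mul_pow, Real.sq_sqrt (by linarith : (0:ℝ) ≤ 1+y)]
    norm_num
  have harg : -(5/2) ≤ -(2*x)*(Real.sin θ*Real.sin φ)^2 - 2*y*Real.cos θ^2 := by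
    have h1 : 2*x*(Real.sin θ*Real.sin φ)^2 ≤ 2 := by
      have := mul_le_mul_of_nonneg_left hp (by linarith : (0:ℝ) ≤ 2*x)
      rw [hε2] at this
      calc 2*x*(Real.sin θ*Real.sin φ)^2 ≤ 2*x*(1/x) := this
        _ = 2 := by field_simp
    have h2 : 2*y*Real.cos θ^2 ≤ 1/2 := by
      have hmul := mul_le_mul_of_nonneg_left hC (by linarith : (0:ℝ) ≤ 2*y)
      rw [hδ2] at hmul
      have hsum : 2*y*(1/(4*(1+y))) ≤ 1/2 := by
        rw [mul_one_div, div_le_div_iff₀ (by positivity) (by norm_num)]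
        nlinarith
      linarith
    linarith
  have hE : Real.exp (-(5/2)) ≤ EE x y θ φ := Real.exp_le_exp.mpr harg
  have h21 := exp_52
  unfold gD
  nlinarith [Real.exp_nonneg (-(5/2))]

lemma SI_gD_lower {x y : ℝ} (hx : 1 ≤ x) (hy : 0 ≤ y) :
    1/(56*(Real.sqrt x*Real.sqrt (1+y))) ≤ SI (gD x y) := by
  have hx0 : (0:ℝ) < x := by linarith
  have hsy1 : (1:ℝ) ≤ Real.sqrt (1+y) := Real.one_le_sqrt.mpr (by linarith)
  have hsx1 : (1:ℝ) ≤ Real.sqrt x := Real.one_le_sqrt.mpr (by linarith)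
  set δ := 1/(2*Real.sqrt (1+y)) with hδdef
  set ε := 1/Real.sqrt x with hεdef
  have hδpos : 0 < δ := by positivity
  have hδhalf : δ ≤ 1/2 := by
    rw [hδdef, div_le_div_iff₀ (by positivity) (by norm_num)]; linarith
  have hεpos : 0 < ε := by positivity
  have hε1 : ε ≤ 1 := by rw [hεdef, div_le_one (by positivity)]; exact hsx1
  have hπ : (3:ℝ) < π := Real.pi_gt_three
  have ha0 : (0:ℝ) ≤ π/2 - δ := by linarith
  have hab : π/2 - δ ≤ π/2 := by linarith
  have hbπ : π/2 ≤ π := by linarith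
  have hε2π : ε ≤ 2*π := by linarith
  -- inner bound for θ in the window
  have hinner : ∀ θ ∈ Set.Icc (π/2 - δ) (π/2),
      (1/28)*ε ≤ ∫ φ in (0:ℝ)..(2*π), gD x y θ φ := by
    intro θ hθ
    have hθIcc : θ ∈ Set.Icc (0:ℝ) π := ⟨by linarith [hθ.1], by linarith [hθ.2]⟩
    have hcont : Continuous fun φ => gD x y θ φ := by unfold gD EE; fun_prop
    have hsplit : (∫ φ in (0:ℝ)..(2*π), gD x y θ φ)
        = (∫ φ in (0:ℝ)..ε, gD x y θ φ) + ∫ φ in ε..(2*π), gD x y θ φ :=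
      (intervalIntegral.integral_add_adjacent_intervals (hcont.intervalIntegrable _ _)
        (hcont.intervalIntegrable _ _)).symm
    have h2 : (0:ℝ) ≤ ∫ φ in ε..(2*π), gD x y θ φ :=
      intervalIntegral.integral_nonneg hε2π (fun φ _ => gD_nonneg x y hθIcc φ)
    have h1 : (1/28)*ε ≤ ∫ φ in (0:ℝ)..ε, gD x y θ φ := by
      have hconst : (∫ _ in (0:ℝ)..ε, (1/28:ℝ)) = (1/28)*ε := by
        rw [intervalIntegral.integral_const, smul_eq_mul, sub_zero]; ring
      rw [← hconst]
      refine intervalIntegral.integral_mono_on hεpos.le intervalIntegrable_const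
        (hcont.intervalIntegrable _ _) fun φ hφ => gD_pt_lower hx hy hθ hφ
    linarith [hsplit]
  -- outer decomposition
  have hii := outer_ii (cont_gD x y)
  have hsplit1 : (∫ θ in (0:ℝ)..π, ∫ φ in (0:ℝ)..(2*π), gD x y θ φ)
      = (∫ θ in (0:ℝ)..(π/2-δ), ∫ φ in (0:ℝ)..(2*π), gD x y θ φ)
        + (∫ θ in (π/2-δ)..(π/2), ∫ φ in (0:ℝ)..(2*π), gD x y θ φ)
        + (∫ θ in (π/2:ℝ)..π, ∫ φ in (0:ℝ)..(2*π), gD x y θ φ) := by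
    rw [intervalIntegral.integral_add_adjacent_intervals (hii _ _) (hii _ _),
      intervalIntegral.integral_add_adjacent_intervals (hii _ _) (hii _ _)]
  have hn1 : (0:ℝ) ≤ ∫ θ in (0:ℝ)..(π/2-δ), ∫ φ in (0:ℝ)..(2*π), gD x y θ φ := by
    refine intervalIntegral.integral_nonneg ha0 fun θ hθ => ?_
    exact intervalIntegral.integral_nonneg (by positivity)
      (fun φ _ => gD_nonneg x y ⟨hθ.1, by linarith [hθ.2]⟩ φ)
  have hn3 : (0:ℝ) ≤ ∫ θ in (π/2:ℝ)..π, ∫ φ in (0:ℝ)..(2*π), gD x y θ φ := by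
    refine intervalIntegral.integral_nonneg hbπ fun θ hθ => ?_
    exact intervalIntegral.integral_nonneg (by positivity)
      (fun φ _ => gD_nonneg x y ⟨by linarith [hθ.1], hθ.2⟩ φ)
  have hmid : (1/28)*ε*δ ≤ ∫ θ in (π/2-δ)..(π/2), ∫ φ in (0:ℝ)..(2*π), gD x y θ φ := by
    have hconst : (∫ _ in (π/2-δ)..(π/2), ((1/28)*ε : ℝ)) = (1/28)*ε*δ := by
      rw [intervalIntegral.integral_const, smul_eq_mul]
      ring_nf
    rw [← hconst]
    exact intervalIntegral.integral_mono_on hab intervalIntegrable_const (hii _ _) hinner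
  have hfin : (1/28)*ε*δ ≤ SI (gD x y) := by
    unfold SI; rw [hsplit1]; linarith
  refine le_trans (le_of_eq ?_) hfin
  rw [hεdef, hδdef]
  field_simp
  ring

open MeasureTheory intervalIntegral Function

lemma cont_gN (x y : ℝ) : Continuous (uncurry (gN x y)) := by
  unfold uncurry gN EE; fun_prop

lemma SI_decomp (x y : ℝ) : SI (g0 x y) = SI (gD x y) - 4*x*SI (gN x y) := by
  have h1 : SI (g0 x y) = SI (fun θ φ => gD x y θ φ - (4*x) * gN x y θ φ) := by
    congr 1; funext θ φ; unfold g0 gD gN; ring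
  rw [h1, SI_sub (cont_gD x y) (by
    have := cont_gN x y
    exact continuous_const.mul this : Continuous (uncurry fun θ φ => (4*x) * gN x y θ φ)),
    SI_const_mul (4*x)]

lemma sphere_D (x y : ℝ) :
    sphereIntegral (fun m => Real.exp (∑ i, (![0,-2*x,-2*y]) i * (m i) ^ 2)) = SI (gD x y) := by
  unfold sphereIntegral SI gD EE
  refine intervalIntegral.integral_congr fun θ _ => intervalIntegral.integral_congr fun φ _ => ?_
  simp only [Fin.sum_univ_three, Matrix.cons_val_zero, Matrix.cons_val_one, Matrix.head_cons,
    Matrix.cons_val_two, Matrix.tail_cons]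
  congr 1
  exact congrArg Real.exp (by ring)

lemma sphere_N (x y : ℝ) :
    sphereIntegral (fun m => (m 1) ^ 2 * Real.exp (∑ j, (![0,-2*x,-2*y]) j * (m j) ^ 2))
      = SI (gN x y) := by
  unfold sphereIntegral SI gN EE
  refine intervalIntegral.integral_congr fun θ _ => intervalIntegral.integral_congr fun φ _ => ?_
  simp only [Fin.sum_univ_three, Matrix.cons_val_zero, Matrix.cons_val_one, Matrix.head_cons,
    Matrix.cons_val_two, Matrix.tail_cons]
  congr 2
  exact congrArg Real.exp (by ring)

lemma z2_val {x y : ℝ} (hD : SI (gD x y) ≠ 0) :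
    binghamZ2 ![0,-2*x,-2*y] 1 = SI (gN x y) / SI (gD x y) := by
  unfold binghamZ2 binghamZ
  rw [sphere_D, sphere_N]
  have hπ : (π:ℝ) ≠ 0 := Real.pi_ne_zero
  field_simp


lemma abs_SI_g1_subst {x y : ℝ} (hx : 1 ≤ x) (hy : 0 ≤ y) :
    |SI (g0 x y)| ≤ 4/x * (324/(Real.sqrt x*Real.sqrt (1+y))) := by
  rw [SI_g0_eq_g1 x y]
  refine (abs_SI_g1_le hx hy).trans ?_
  exact mul_le_mul_of_nonneg_left (SI_wh_bound hx hy) (by positivity)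

end BinghamAux

/-- There exist `M > 0` and `C₃ > 0` such that for all `x ≥ M` and `y ≥ 0`,
with `μ = (0, −2x, −2y)`, one has `|1 − 4x z₂(μ)| ≤ C₃ / x`. -/
theorem one_sub_four_x_z2_bound :
    ∃ M : ℝ, 0 < M ∧ ∃ C₃ : ℝ, 0 < C₃ ∧
      ∀ x : ℝ, M ≤ x → ∀ y : ℝ, 0 ≤ y →
        |1 - 4 * x * binghamZ2 ![0, -2 * x, -2 * y] 1| ≤ C₃ / x := by
  refine ⟨1, one_pos, 100000, by norm_num, fun x hx y hy => ?_⟩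
  have hx0 : (0:ℝ) < x := by linarith
  have hsx : (0:ℝ) < Real.sqrt x := Real.sqrt_pos.mpr hx0
  have hsy : (0:ℝ) < Real.sqrt (1+y) := Real.sqrt_pos.mpr (by linarith)
  set W := Real.sqrt x * Real.sqrt (1+y) with hW
  have hW0 : 0 < W := mul_pos hsx hsy
  have hlow := BinghamAux.SI_gD_lower hx hy
  have hDpos : 0 < BinghamAux.SI (BinghamAux.gD x y) :=
    lt_of_lt_of_le (by positivity) hlow
  have hD : BinghamAux.SI (BinghamAux.gD x y) ≠ 0 := ne_of_gt hDpos
  rw [BinghamAux.z2_val hD]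
  have hkey : 1 - 4*x*(BinghamAux.SI (BinghamAux.gN x y) / BinghamAux.SI (BinghamAux.gD x y))
      = BinghamAux.SI (BinghamAux.g0 x y) / BinghamAux.SI (BinghamAux.gD x y) := by
    rw [BinghamAux.SI_decomp x y]
    field_simp
  rw [show 1 - 4 * x * (BinghamAux.SI (BinghamAux.gN x y) / BinghamAux.SI (BinghamAux.gD x y))
      = BinghamAux.SI (BinghamAux.g0 x y) / BinghamAux.SI (BinghamAux.gD x y) from hkey]
  rw [abs_div, abs_of_pos hDpos]
  have hnum := BinghamAux.abs_SI_g1_subst hx hy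
  have hnum' : |BinghamAux.SI (BinghamAux.g0 x y)| ≤ 1296/(x*W) := by
    refine hnum.trans (le_of_eq ?_)
    rw [hW]
    field_simp
    ring
  have hden : 1/(56*W) ≤ BinghamAux.SI (BinghamAux.gD x y) := by
    rw [hW]; exact hlow
  have step1 : |BinghamAux.SI (BinghamAux.g0 x y)| / BinghamAux.SI (BinghamAux.gD x y)
      ≤ |BinghamAux.SI (BinghamAux.g0 x y)| / (1/(56*W)) :=
    div_le_div_of_nonneg_left (abs_nonneg _) (by positivity) hden
  refine step1.trans ?_
  have step2 : |BinghamAux.SI (BinghamAux.g0 x y)| / (1/(56*W))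
      = |BinghamAux.SI (BinghamAux.g0 x y)| * (56*W) := by
    field_simp
  rw [step2]
  have step3 : |BinghamAux.SI (BinghamAux.g0 x y)| * (56*W) ≤ (1296/(x*W)) * (56*W) :=
    mul_le_mul_of_nonneg_right hnum' (by positivity)
  refine step3.trans ?_
  have : (1296/(x*W)) * (56*W) = 72576/x := by
    field_simp
    ring
  rw [this]
  gcongr
  norm_num
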